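/- The number of self-dual monotone Boolean functions on n+2 variables equals the number of pairs (b, d) of monotone Boolean functions on n variables satisfying d ≥ b | b*. Equivalently, λ_{n+2} = Σ_{b ∈ D_n} |{z ∈ D_n : b|b* ≤ z}|. -/

import Mathlib

abbrev BF (n : ℕ) := (Fin n → Bool) → Bool

def dual {n : ℕ} (f : BF n) : BF n := fun v => ! f (fun i => ! v i)

def SelfDual {n : ℕ} (f : BF n) : Prop := f = dual f

namespace SD9
variable {n : ℕ}

lemma dual_dual (f : BF n) : dual (dual f) = f := by
  funext v; simp [dual]

lemma bool_not_le {x y : Bool} (h : x ≤ y) : (!y) ≤ (!x) := by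
  cases x <;> cases y <;> simp_all

lemma monotone_dual {f : BF n} (hf : Monotone f) : Monotone (dual f) := by
  intro v w h
  exact bool_not_le (hf (fun i => bool_not_le (h i)))

lemma dual_le_dual {f g : BF n} (h : f ≤ g) : dual g ≤ dual f := by
  intro v
  exact bool_not_le (h (fun i => ! v i))

def glue (b d : BF n) : BF (n + 2) := fun w =>
  bif w ((Fin.last n).castSucc) then
    (bif w (Fin.last (n + 1)) then d (fun i => w i.castSucc.castSucc)
      else dual b (fun i => w i.castSucc.castSucc))
  else
    (bif w (Fin.last (n + 1)) then b (fun i => w i.castSucc.castSucc)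
      else dual d (fun i => w i.castSucc.castSucc))

lemma glue_snoc (b d : BF n) (v : Fin n → Bool) (a c : Bool) :
    glue b d (Fin.snoc (Fin.snoc v a) c)
      = bif a then (bif c then d v else dual b v)
        else (bif c then b v else dual d v) := by
  simp [glue, Fin.snoc_castSucc, Fin.snoc_last]

lemma eq_snoc (w : Fin (n + 2) → Bool) :
    w = Fin.snoc (Fin.snoc (fun i => w i.castSucc.castSucc)
          (w ((Fin.last n).castSucc))) (w (Fin.last (n + 1))) := by
  conv_lhs => rw [← Fin.snoc_init_self w, ← Fin.snoc_init_self (Fin.init w)]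
  rfl

end SD9

namespace SD9
variable {n : ℕ}

def comp2 (x : BF (n + 2)) (a c : Bool) : BF n :=
  fun v => x (Fin.snoc (Fin.snoc v a) c)

lemma snoc2_le {v v' : Fin n → Bool} {a a' c c' : Bool}
    (hv : v ≤ v') (ha : a ≤ a') (hc : c ≤ c') :
    (Fin.snoc (Fin.snoc v a) c : Fin (n + 2) → Bool)
      ≤ Fin.snoc (Fin.snoc v' a') c' := by
  intro j
  refine Fin.lastCases ?_ (fun i => ?_) j
  · simpa using hc
  · simp only [Fin.snoc_castSucc]
    refine Fin.lastCases ?_ (fun i' => ?_) i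
    · simpa using ha
    · simpa using hv i'

lemma not_snoc2 (v : Fin n → Bool) (a c : Bool) :
    (fun j => ! (Fin.snoc (Fin.snoc v a) c : Fin (n + 2) → Bool) j)
      = Fin.snoc (Fin.snoc (fun i => ! v i) (!a)) (!c) := by
  funext j
  refine Fin.lastCases ?_ (fun i => ?_) j
  · simp
  · simp only [Fin.snoc_castSucc]
    refine Fin.lastCases ?_ (fun i' => ?_) i <;> simp

lemma glue_selfdual_pt (b d : BF n) (v : Fin n → Bool) (a c : Bool) :
    glue b d (Fin.snoc (Fin.snoc v a) c)
      = dual (glue b d) (Fin.snoc (Fin.snoc v a) c) := by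
  show _ = ! glue b d _
  rw [not_snoc2, glue_snoc, glue_snoc]
  cases a <;> cases c <;> simp [dual]

lemma glue_selfdual (b d : BF n) : SelfDual (glue b d) := by
  funext w
  conv_lhs => rw [eq_snoc w]
  conv_rhs => rw [eq_snoc w]
  exact glue_selfdual_pt b d _ _ _

lemma glue_monotone {b d : BF n} (hb : Monotone b) (hd : Monotone d)
    (h1 : b ≤ d) (h2 : dual b ≤ d) : Monotone (glue b d) := by
  intro w w' h
  have hu : (fun i : Fin n => w i.castSucc.castSucc) ≤ (fun i : Fin n => w' i.castSucc.castSucc) :=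
    fun i => h _
  have ha := h ((Fin.last n).castSucc)
  have hc := h (Fin.last (n + 1))
  have hdb : dual d ≤ b := by
    have := dual_le_dual h2; rwa [dual_dual] at this
  have hdd : dual d ≤ dual b := dual_le_dual h1
  simp only [glue]
  revert ha hc
  cases w ((Fin.last n).castSucc) <;> cases w' ((Fin.last n).castSucc) <;>
    cases w (Fin.last (n + 1)) <;> cases w' (Fin.last (n + 1)) <;>
    intro ha hc <;> simp_all <;>
    first
      | exact absurd ha (by simp)
      | exact absurd hc (by simp)
      | exact hd hu
      | exact hb hu
      | exact monotone_dual hb hu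
      | exact monotone_dual hd hu
      | exact le_trans (h1 _) (hd hu)
      | exact le_trans (h2 _) (hd hu)
      | exact le_trans (hdb _) (hb hu)
      | exact le_trans (hdd _) (monotone_dual hb hu)
      | exact le_trans (hdb _) (le_trans (h1 _) (hd hu))

lemma selfdual_apply {x : BF (n + 2)} (hx : SelfDual x) (w : Fin (n + 2) → Bool) :
    x w = ! x (fun j => ! w j) := by
  conv_lhs => rw [hx]
  rfl

lemma comp2_tf {x : BF (n + 2)} (hx : SelfDual x) (v : Fin n → Bool) :
    dual (comp2 x false true) v = comp2 x true false v := by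
  simp only [comp2, dual]
  rw [selfdual_apply hx (Fin.snoc (Fin.snoc v true) false), not_snoc2]
  simp

lemma comp2_ff {x : BF (n + 2)} (hx : SelfDual x) (v : Fin n → Bool) :
    dual (comp2 x true true) v = comp2 x false false v := by
  simp only [comp2, dual]
  rw [selfdual_apply hx (Fin.snoc (Fin.snoc v false) false), not_snoc2]
  simp

noncomputable def theEquiv :
    {x : BF (n + 2) // Monotone x ∧ SelfDual x} ≃
      {p : BF n × BF n // Monotone p.1 ∧ Monotone p.2 ∧ p.1 ⊔ dual p.1 ≤ p.2} where
  toFun := fun ⟨x, hm, hs⟩ =>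
    ⟨(comp2 x false true, comp2 x true true), by
      refine ⟨?_, ?_, ?_⟩
      · exact fun v v' hv => hm (snoc2_le hv le_rfl le_rfl)
      · exact fun v v' hv => hm (snoc2_le hv le_rfl le_rfl)
      · refine sup_le ?_ ?_
        · exact fun v => hm (snoc2_le le_rfl (Bool.false_le _) le_rfl)
        · intro v
          rw [comp2_tf hs]
          exact hm (snoc2_le le_rfl le_rfl (Bool.false_le _))⟩
  invFun := fun ⟨(b, d), hb, hd, hle⟩ =>
    ⟨glue b d, glue_monotone hb hd (le_trans le_sup_left hle)
        (le_trans le_sup_right hle), glue_selfdual b d⟩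
  left_inv := by
    rintro ⟨x, hm, hs⟩
    ext w
    show glue (comp2 x false true) (comp2 x true true) w = x w
    conv_lhs => rw [eq_snoc w]
    conv_rhs => rw [eq_snoc w]
    rw [glue_snoc]
    cases hA : w ((Fin.last n).castSucc) <;> cases hC : w (Fin.last (n + 1)) <;>
      simp only [Bool.cond_false, Bool.cond_true]
    · exact comp2_ff hs _
    · rfl
    · exact comp2_tf hs _
    · rfl
  right_inv := by
    rintro ⟨⟨b, d⟩, hb, hd, hle⟩
    ext v
    · show glue b d (Fin.snoc (Fin.snoc v false) true) = b v
      rw [glue_snoc]; rfl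
    · show glue b d (Fin.snoc (Fin.snoc v true) true) = d v
      rw [glue_snoc]; rfl

end SD9

open Classical in
theorem stmt_9 (n : ℕ) :
    Nat.card {x : BF (n + 2) // Monotone x ∧ SelfDual x}
      = Nat.card {p : BF n × BF n //
          Monotone p.1 ∧ Monotone p.2 ∧ p.1 ⊔ dual p.1 ≤ p.2} ∧
    Nat.card {x : BF (n + 2) // Monotone x ∧ SelfDual x}
      = ∑ b ∈ Finset.univ.filter (fun b : BF n => Monotone b),
          (Finset.univ.filter
            (fun z : BF n => Monotone z ∧ b ⊔ dual b ≤ z)).card := by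
  classical
  have h1 : Nat.card {x : BF (n + 2) // Monotone x ∧ SelfDual x}
      = Nat.card {p : BF n × BF n //
          Monotone p.1 ∧ Monotone p.2 ∧ p.1 ⊔ dual p.1 ≤ p.2} :=
    Nat.card_congr SD9.theEquiv
  refine ⟨h1, h1.trans ?_⟩
  rw [Nat.card_eq_fintype_card, Fintype.card_subtype]
  rw [Finset.card_eq_sum_card_fiberwise
    (f := Prod.fst) (t := (Finset.univ : Finset (BF n)))
    (fun x _ => Finset.mem_univ _)]
  rw [Finset.sum_filter]
  apply Finset.sum_congr rfl
  intro b _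
  by_cases hb : Monotone b
  · rw [if_pos hb]
    refine Finset.card_bij' (fun p _ => p.2) (fun z _ => (b, z)) ?_ ?_ ?_ ?_
    · intro p hp
      simp only [Finset.mem_filter, Finset.mem_univ, true_and] at hp ⊢
      obtain ⟨⟨hm1, hm2, hle⟩, hfst⟩ := hp
      subst hfst
      exact ⟨hm2, hle⟩
    · intro z hz
      simp only [Finset.mem_filter, Finset.mem_univ, true_and] at hz ⊢
      exact ⟨⟨hb, hz.1, hz.2⟩, trivial⟩
    · intro p hp
      simp only [Finset.mem_filter] at hp
      obtain ⟨_, hfst⟩ := hp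
      exact Prod.ext hfst.symm rfl
    · intro z _
      rfl
  · rw [if_neg hb]
    rw [Finset.card_eq_zero, Finset.filter_eq_empty_iff]
    intro p hp
    simp only [Finset.mem_filter, Finset.mem_univ, true_and] at hp
    intro hfst
    exact hb (hfst ▸ hp.1)
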